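/- Let 𝓜 be a finite set of even cardinality M = 2n, ψ : 𝓜 → 𝓜 an involution, and k a nonnegative even integer. Then the sum over all x ∈ X_ψ of m_k(x) equals |𝓜 \ Fix(ψ)| · C(n, k) · 2^k · (M−2)^(n−k) + |Fix(ψ)| · C(n, k/2) · (M−1)^(n−k/2), where C(·,·) denotes binomial coefficients. -/

import Mathlib

open Finset

/-- The set of ψ-symmetric vectors of length `M`: vectors `x` with
`x (M+1-j) = ψ (x j)` for all `j` (0-indexed: `x j.rev = ψ (x j)`). -/
def Xpsi (α : Type*) [Fintype α] [DecidableEq α] (M : ℕ) (ψ : α → α) :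
    Finset (Fin M → α) :=
  Finset.univ.filter fun x => ∀ j : Fin M, x j.rev = ψ (x j)

/-- The number of occurrences of `y` among the components of `x`. -/
def occCount {α : Type*} {M : ℕ} [DecidableEq α] (x : Fin M → α) (y : α) : ℕ :=
  (Finset.univ.filter fun j => x j = y).card


set_option linter.unusedSectionVars false


lemma count_pi {α : Type*} [Fintype α] [DecidableEq α] (n k : ℕ) (s : Finset α) :
    ((univ : Finset (Fin n → α)).filter fun f => (univ.filter fun i => f i ∈ s).card = k).card
      = n.choose k * s.card ^ k * (Fintype.card α - s.card) ^ (n - k) := by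
  classical
  rw [Finset.card_eq_sum_card_fiberwise
      (f := fun f : Fin n → α => univ.filter fun i => f i ∈ s)
      (t := Finset.powersetCard k (univ : Finset (Fin n)))
      (fun f hf => by
        simp only [mem_coe, mem_filter, mem_univ, true_and] at hf
        exact Finset.mem_powersetCard.2 ⟨Finset.subset_univ _, hf⟩)]
  have key : ∀ T ∈ Finset.powersetCard k (univ : Finset (Fin n)),
      (((univ : Finset (Fin n → α)).filter fun f => (univ.filter fun i => f i ∈ s).card = k).filter
        fun f => (univ.filter fun i => f i ∈ s) = T).card
        = s.card ^ k * (Fintype.card α - s.card) ^ (n - k) := by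
    intro T hT
    obtain ⟨-, hTcard⟩ := Finset.mem_powersetCard.1 hT
    have heq : (((univ : Finset (Fin n → α)).filter fun f =>
          (univ.filter fun i => f i ∈ s).card = k).filter
        fun f => (univ.filter fun i => f i ∈ s) = T)
        = Fintype.piFinset (fun i => if i ∈ T then s else sᶜ) := by
      ext f
      simp only [mem_filter, mem_univ, true_and, Fintype.mem_piFinset]
      constructor
      · rintro ⟨-, rfl⟩ i
        by_cases hi : f i ∈ s
        · simp [hi]
        · simp [hi]
      · intro h
        have hiff : ∀ i, f i ∈ s ↔ i ∈ T := by
          intro i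
          by_cases hi : i ∈ T
          · have := h i; simp [hi] at this; simp [hi, this]
          · have := h i; simp [hi, Finset.mem_compl] at this; simp [hi, this]
        have hset : (univ.filter fun i => f i ∈ s) = T := by
          ext i; simp [hiff i]
        exact ⟨hset ▸ hTcard, hset⟩
    rw [heq, Fintype.card_piFinset]
    have : ∀ i : Fin n, ((if i ∈ T then s else sᶜ) : Finset α).card
        = if i ∈ T then s.card else sᶜ.card := fun i => by split <;> rfl
    simp only [this]
    rw [Finset.prod_ite, Finset.prod_const, Finset.prod_const]
    have h1 : (univ.filter fun i => i ∈ T) = T := by ext i; simp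
    have h2 : ((univ : Finset (Fin n)).filter fun i => ¬ i ∈ T).card = n - k := by
      rw [Finset.filter_not, Finset.card_sdiff_of_subset (Finset.filter_subset _ _)]
      simp [h1, hTcard]
    rw [h1, h2, hTcard, Finset.card_compl]
  rw [Finset.sum_congr rfl key, Finset.sum_const, Finset.card_powersetCard,
    Finset.card_univ, Fintype.card_fin, smul_eq_mul, mul_assoc]

section Aux
variable {α : Type*} [Fintype α] [DecidableEq α]


def phiMap (n : ℕ) (ψ : α → α) (f : Fin n → α) : Fin (2 * n) → α :=
  fun j => if h : (j : ℕ) < n then f ⟨j, h⟩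
    else ψ (f ⟨2 * n - 1 - j, by have := j.isLt; omega⟩)

lemma phiMap_mem (n : ℕ) (ψ : α → α) (hψ : ∀ y, ψ (ψ y) = y) (f : Fin n → α) :
    phiMap n ψ f ∈ Xpsi α (2 * n) ψ := by
  simp only [Xpsi, mem_filter, mem_univ, true_and]
  intro j
  have hj := j.isLt
  have hrev : (j.rev : ℕ) = 2 * n - 1 - (j : ℕ) := by
    simp [Fin.val_rev]; omega
  by_cases h : (j : ℕ) < n
  · have h2 : ¬ ((j.rev : ℕ) < n) := by omega
    simp only [phiMap, dif_neg h2, dif_pos h]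
    have : (⟨2 * n - 1 - (j.rev : ℕ), by omega⟩ : Fin n) = ⟨(j : ℕ), h⟩ := by
      apply Fin.ext; show 2 * n - 1 - (j.rev : ℕ) = (j : ℕ); omega
    rw [this]
  · have h2 : ((j.rev : ℕ) < n) := by omega
    simp only [phiMap, dif_pos h2, dif_neg h]
    rw [hψ]
    have : (⟨(j.rev : ℕ), h2⟩ : Fin n) = ⟨2 * n - 1 - (j : ℕ), by omega⟩ := by
      apply Fin.ext; show (j.rev : ℕ) = 2 * n - 1 - (j : ℕ); omega
    rw [this]

lemma phiMap_restrict (n : ℕ) (ψ : α → α) (x : Fin (2 * n) → α)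
    (hx : x ∈ Xpsi α (2 * n) ψ) :
    phiMap n ψ (fun i : Fin n => x ⟨(i : ℕ), by have := i.isLt; omega⟩) = x := by
  simp only [Xpsi, mem_filter, mem_univ, true_and] at hx
  funext j
  have hj := j.isLt
  by_cases h : (j : ℕ) < n
  · simp only [phiMap, dif_pos h]
  · simp only [phiMap, dif_neg h]
    set j' : Fin (2 * n) := ⟨2 * n - 1 - (j : ℕ), by omega⟩ with hj'
    have hrev : j'.rev = j := by
      apply Fin.ext
      simp [Fin.val_rev, hj']; omega
    have := hx j'
    rw [hrev] at this
    rw [← this]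

lemma card_filter_Xpsi (n : ℕ) (ψ : α → α) (hψ : ∀ y, ψ (ψ y) = y)
    (P : (Fin (2 * n) → α) → Prop) [DecidablePred P] :
    ((Xpsi α (2 * n) ψ).filter P).card
      = ((univ : Finset (Fin n → α)).filter fun f => P (phiMap n ψ f)).card := by
  refine Finset.card_nbij'
    (i := fun x => fun i : Fin n => x ⟨(i : ℕ), by have := i.isLt; omega⟩)
    (j := fun f => phiMap n ψ f) ?_ ?_ ?_ ?_
  · intro x hx
    simp only [mem_coe, mem_filter] at hx ⊢
    refine ⟨mem_univ _, ?_⟩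
    rw [phiMap_restrict n ψ x hx.1]
    exact hx.2
  · intro f hf
    simp only [mem_coe, mem_filter, mem_univ, true_and] at hf ⊢
    exact ⟨phiMap_mem n ψ hψ f, hf⟩
  · intro x hx
    simp only [mem_coe, mem_filter] at hx
    exact phiMap_restrict n ψ x hx.1
  · intro f hf
    funext i
    simp only [phiMap, Fin.val_mk, dif_pos i.isLt]

lemma occ_phiMap (n : ℕ) (ψ : α → α) (hψ : ∀ y, ψ (ψ y) = y) (f : Fin n → α) (y : α) :
    occCount (phiMap n ψ f) y = occCount f y + occCount f (ψ y) := by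
  classical
  set e : Fin n ⊕ Fin n ≃ Fin (2 * n) :=
    finSumFinEquiv.trans (finCongr (two_mul n).symm) with he
  have hval1 : ∀ i : Fin n, ((e (Sum.inl i)) : ℕ) = (i : ℕ) := by
    intro i; simp [he, finCongr_apply]
  have hval2 : ∀ i : Fin n, ((e (Sum.inr i)) : ℕ) = n + (i : ℕ) := by
    intro i; simp [he, finCongr_apply]; omega
  unfold occCount
  rw [Finset.card_filter, Finset.card_filter, Finset.card_filter]
  rw [← Equiv.sum_comp e (fun j => if phiMap n ψ f j = y then (1:ℕ) else 0)]
  rw [Fintype.sum_sum_type]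
  congr 1
  · apply Finset.sum_congr rfl
    intro i _
    have hlt : ((e (Sum.inl i)) : ℕ) < n := by rw [hval1]; exact i.isLt
    have h1 : phiMap n ψ f (e (Sum.inl i)) = f i := by
      simp only [phiMap, dif_pos hlt]
      exact congrArg f (Fin.ext (hval1 i))
    rw [h1]
  · have step1 : ∀ i : Fin n, phiMap n ψ f (e (Sum.inr i)) = ψ (f i.rev) := by
      intro i
      have hge : ¬ ((e (Sum.inr i)) : ℕ) < n := by rw [hval2]; omega
      simp only [phiMap, dif_neg hge]
      refine congrArg ψ (congrArg f (Fin.ext ?_))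
      show 2 * n - 1 - ((e (Sum.inr i)) : ℕ) = (i.rev : ℕ)
      rw [hval2, Fin.val_rev]
      have hi := i.isLt
      omega
    calc ∑ i : Fin n, (if phiMap n ψ f (e (Sum.inr i)) = y then (1:ℕ) else 0)
        = ∑ i : Fin n, (if f i.rev = ψ y then (1:ℕ) else 0) := by
          apply Finset.sum_congr rfl
          intro i _
          rw [step1 i]
          congr 1
          simp only [eq_iff_iff]
          constructor
          · intro h; rw [← h, hψ]
          · intro h; rw [h, hψ]
      _ = ∑ i : Fin n, (if f i = ψ y then (1:ℕ) else 0) := by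
          rw [← Equiv.sum_comp (Fin.revPerm) (fun i : Fin n => if f i = ψ y then (1:ℕ) else 0)]
          rfl

end Aux

/-- `mCount x k` is the number of elements occurring exactly `k` times among
the components of `x`. -/
def mCount {α : Type*} {M : ℕ} [Fintype α] [DecidableEq α] (x : Fin M → α) (k : ℕ) : ℕ :=
  (Finset.univ.filter fun y => occCount x y = k).card

/-- The set of fixed points of `ψ`. -/
def fixPts (α : Type*) [Fintype α] [DecidableEq α] (ψ : α → α) : Finset α :=
  Finset.univ.filter fun y => ψ y = y

theorem stmt_5 {α : Type*} [Fintype α] [DecidableEq α] (n : ℕ) (hn : 1 ≤ n)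
    (hcard : Fintype.card α = 2 * n) (ψ : α → α) (hψ : ∀ y, ψ (ψ y) = y)
    (k : ℕ) (hk : Even k) :
    ∑ x ∈ Xpsi α (2 * n) ψ, mCount x k
      = (Fintype.card α - (fixPts α ψ).card) * n.choose k * 2 ^ k
          * (2 * n - 2) ^ (n - k)
        + (fixPts α ψ).card * n.choose (k / 2) * (2 * n - 1) ^ (n - k / 2) := by
  classical
  have h1 : ∑ x ∈ Xpsi α (2 * n) ψ, mCount x k
      = ∑ y : α, ((Xpsi α (2 * n) ψ).filter fun x => occCount x y = k).card := by
    simp only [mCount, Finset.card_filter]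
    rw [Finset.sum_comm]
  rw [h1]
  have h2 : ∀ y : α, ((Xpsi α (2 * n) ψ).filter fun x => occCount x y = k).card
      = if ψ y = y then n.choose (k / 2) * (2 * n - 1) ^ (n - k / 2)
        else n.choose k * 2 ^ k * (2 * n - 2) ^ (n - k) := by
    intro y
    rw [card_filter_Xpsi n ψ hψ]
    by_cases hfix : ψ y = y
    · rw [if_pos hfix]
      have hpred : ∀ f : Fin n → α, (occCount (phiMap n ψ f) y = k) ↔
          ((univ.filter fun i => f i ∈ ({y} : Finset α)).card = k / 2) := by
        intro f
        rw [occ_phiMap n ψ hψ, hfix]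
        have hs : (univ.filter fun i : Fin n => f i ∈ ({y} : Finset α))
            = univ.filter fun i => f i = y := by
          simp only [Finset.mem_singleton]
        rw [hs]
        obtain ⟨m, hm⟩ := hk
        show occCount f y + occCount f y = k ↔ occCount f y = k / 2
        omega
      rw [Finset.filter_congr (fun f _ => hpred f), count_pi]
      rw [Finset.card_singleton, one_pow, mul_one, hcard]
    · rw [if_neg hfix]
      have hpred : ∀ f : Fin n → α, (occCount (phiMap n ψ f) y = k) ↔
          ((univ.filter fun i => f i ∈ ({y, ψ y} : Finset α)).card = k) := by
        intro f
        rw [occ_phiMap n ψ hψ]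
        have hsplit : (univ.filter fun i : Fin n => f i ∈ ({y, ψ y} : Finset α))
            = (univ.filter fun i => f i = y) ∪ (univ.filter fun i => f i = ψ y) := by
          ext i
          simp only [Finset.mem_union, Finset.mem_filter, Finset.mem_univ, true_and,
            Finset.mem_insert, Finset.mem_singleton]
        have hdisj : Disjoint (univ.filter fun i : Fin n => f i = y)
            (univ.filter fun i => f i = ψ y) := by
          rw [Finset.disjoint_left]
          intro i hi1 hi2
          simp only [Finset.mem_filter, Finset.mem_univ, true_and] at hi1 hi2
          exact hfix (hi2.symm.trans hi1)
        rw [hsplit, Finset.card_union_of_disjoint hdisj]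
        exact Iff.rfl
      rw [Finset.filter_congr (fun f _ => hpred f), count_pi]
      have hc2 : ({y, ψ y} : Finset α).card = 2 := by
        rw [Finset.card_insert_of_notMem (by simp [Finset.mem_singleton]; exact fun h => hfix h.symm),
          Finset.card_singleton]
      rw [hc2, hcard]
  rw [Finset.sum_congr rfl (fun y _ => h2 y)]
  rw [Finset.sum_ite, Finset.sum_const, Finset.sum_const, smul_eq_mul, smul_eq_mul]
  have hfixset : ((univ : Finset α).filter fun y => ψ y = y) = fixPts α ψ := rfl
  have hnot : ((univ : Finset α).filter fun y => ¬ ψ y = y).card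
      = Fintype.card α - (fixPts α ψ).card := by
    rw [Finset.filter_not, Finset.card_sdiff_of_subset (Finset.filter_subset _ _)]
    rw [Finset.card_univ, hfixset]
  rw [hfixset, hnot]
  ring
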